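/- If Â⁽ⁿ⁾ is nondecreasing in s for each n and ω, A is continuous and nondecreasing on [0,t], and Â⁽ⁿ⁾(s) → A(s) in probability for each s in a dense subset of [0,t] including the endpoints, then sup_{s ∈ [0,t]} |Â⁽ⁿ⁾(s) − A(s)| → 0 in probability (a stochastic Pólya/Dini-type theorem). -/

import Mathlib

open MeasureTheory Filter

open scoped Classical in
lemma polya_net (t ε : ℝ) (ht : 0 < t) (hε : 0 < ε) (A : ℝ → ℝ)
    (hAcont : ContinuousOn A (Set.Icc 0 t))
    (D : Set ℝ) (hD : D ⊆ Set.Icc 0 t) (hdense : Set.Icc (0:ℝ) t ⊆ closure D)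
    (h0 : (0:ℝ) ∈ D) (hte : t ∈ D) :
    ∃ F : Finset ℝ, (↑F : Set ℝ) ⊆ D ∧
      ∀ s ∈ Set.Icc (0:ℝ) t, ∃ u ∈ F, ∃ v ∈ F, u ≤ s ∧ s ≤ v ∧ A v - A u < ε := by
  obtain ⟨δ, hδ, hunif⟩ : ∃ δ > 0, ∀ x ∈ Set.Icc (0:ℝ) t, ∀ y ∈ Set.Icc (0:ℝ) t,
      |x - y| < δ → |A x - A y| < ε := by
    have h := (isCompact_Icc.uniformContinuousOn_of_continuous hAcont)
    rw [Metric.uniformContinuousOn_iff] at h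
    obtain ⟨δ, hδ, h⟩ := h ε hε
    refine ⟨δ, hδ, fun x hx y hy hxy => ?_⟩
    have := h x hx y hy (by rwa [Real.dist_eq])
    rwa [Real.dist_eq] at this
  obtain ⟨k, hk⟩ := exists_nat_gt (3 * t / δ)
  have hk0 : 0 < k := by
    have : 0 < 3 * t / δ := by positivity
    exact_mod_cast this.trans hk
  have hkR : (0:ℝ) < k := by exact_mod_cast hk0
  have htk : 0 < t / k := by positivity
  have h3tk : 3 * (t / k) < δ := by
    rw [div_lt_iff₀ hδ] at hk
    rw [mul_div_assoc', div_lt_iff₀ hkR]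
    nlinarith
  have hchoice : ∀ i : ℕ, ∃ d, d ∈ D ∧ (i ≤ k → |d - i*t/k| < t/k)
      ∧ (i = 0 → d = 0) ∧ (k ≤ i → d = t) := by
    intro i
    rcases Nat.eq_zero_or_pos i with rfl | hi
    · refine ⟨0, h0, fun _ => by simpa using htk, fun _ => rfl, fun h => absurd h (by omega)⟩
    rcases le_or_gt k i with hki | hik
    · refine ⟨t, hte, fun hik2 => ?_, fun h => absurd h (by omega), fun _ => rfl⟩
      have hik3 : (i:ℝ) = k := by exact_mod_cast le_antisymm hik2 hki
      rw [hik3]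
      have h5 : (k:ℝ) * t / k = t := by field_simp
      rw [h5]
      simpa using htk
    · have hc1 : (0:ℝ) ≤ i * t / k := by positivity
      have hc2 : (i:ℝ) * t / k ≤ t := by
        rw [div_le_iff₀ hkR]
        have : (i:ℝ) ≤ k := by exact_mod_cast hik.le
        nlinarith
      have hcl := hdense ⟨hc1, hc2⟩
      rw [Metric.mem_closure_iff] at hcl
      obtain ⟨d, hdD, hdd⟩ := hcl (t/k) htk
      refine ⟨d, hdD, fun _ => ?_, fun h => absurd h (by omega), fun h => absurd h (by omega)⟩
      rw [Real.dist_eq, abs_sub_comm] at hdd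
      exact hdd
  choose σ hσD hσnear hσ0 hσk using hchoice
  refine ⟨(Finset.range (k+1)).image σ, ?_, ?_⟩
  · intro x hx
    simp only [Finset.coe_image, Set.mem_image, Finset.coe_range, Set.mem_Iio] at hx
    obtain ⟨i, _, rfl⟩ := hx
    exact hσD i
  · intro s hs
    set i := Nat.findGreatest (fun j => σ j ≤ s) k with hi
    have hPi : σ i ≤ s := Nat.findGreatest_spec (P := fun j => σ j ≤ s)
      (Nat.zero_le k) (by show σ 0 ≤ s; rw [hσ0 0 rfl]; exact hs.1)
    have hik : i ≤ k := Nat.findGreatest_le k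
    by_cases hieq : i = k
    · -- σ k = t ≤ s, so s = t
      have hst : s = t := le_antisymm hs.2 (by rw [hieq, hσk k le_rfl] at hPi; exact hPi)
      refine ⟨t, ?_, t, ?_, by rw [hst], by rw [hst], by linarith⟩
      all_goals
        simp only [Finset.mem_image, Finset.mem_range]
        exact ⟨k, by omega, hσk k le_rfl⟩
    · have hik' : i < k := lt_of_le_of_ne hik hieq
      have hnotQ : ¬ σ (i+1) ≤ s := Nat.findGreatest_is_greatest (P := fun j => σ j ≤ s) (hi ▸ i.lt_succ_self) (by omega)
      have hsv : s < σ (i+1) := lt_of_not_ge hnotQ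
      refine ⟨σ i, ?_, σ (i+1), ?_, hPi, hsv.le, ?_⟩
      · simp only [Finset.mem_image, Finset.mem_range]; exact ⟨i, by omega, rfl⟩
      · simp only [Finset.mem_image, Finset.mem_range]; exact ⟨i+1, by omega, rfl⟩
      · have h1 := hσnear i (by omega)
        have h2 := hσnear (i+1) (by omega)
        have hdist : |σ (i+1) - σ i| < δ := by
          have hmid : ((i:ℝ)+1) * t / k - (i:ℝ) * t / k = t / k := by field_simp; ring
          have hcast : ((i+1 : ℕ):ℝ) = (i:ℝ) + 1 := by push_cast; ring
          rw [hcast] at h2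
          rw [abs_sub_lt_iff] at h1 h2 ⊢
          constructor <;> nlinarith [h1.1, h1.2, h2.1, h2.2]
        have hu := hD (hσD i)
        have hv := hD (hσD (i+1))
        have := hunif (σ (i+1)) hv (σ i) hu hdist
        calc A (σ (i+1)) - A (σ i) ≤ |A (σ (i+1)) - A (σ i)| := le_abs_self _
        _ < ε := this

/-- Stochastic Pólya/Dini theorem: if each path of `Â⁽ⁿ⁾` is nondecreasing, `A` is
continuous and nondecreasing on `[0,t]`, and `Â⁽ⁿ⁾(s) → A(s)` in probability for every
`s` in a dense subset of `[0,t]` containing the endpoints, then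
`sup_{s ∈ [0,t]} |Â⁽ⁿ⁾(s) − A(s)| → 0` in probability. -/
theorem stochastic_polya_dini
    {Ω : Type*} [MeasurableSpace Ω] (P : Measure Ω) [IsProbabilityMeasure P]
    (t : ℝ) (ht : 0 < t) (A : ℝ → ℝ)
    (hAmono : MonotoneOn A (Set.Icc 0 t)) (hAcont : ContinuousOn A (Set.Icc 0 t))
    (Ahat : ℕ → ℝ → Ω → ℝ)
    (hmono : ∀ n ω, MonotoneOn (fun s => Ahat n s ω) (Set.Icc 0 t))
    (D : Set ℝ) (hD : D ⊆ Set.Icc 0 t) (hdense : Set.Icc (0 : ℝ) t ⊆ closure D)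
    (h0 : (0 : ℝ) ∈ D) (hte : t ∈ D)
    (hpt : ∀ s ∈ D, ∀ ε > 0,
      Tendsto (fun n => P {ω | ε < |Ahat n s ω - A s|}) atTop (nhds 0)) :
    ∀ ε > 0, Tendsto
      (fun n => P {ω | ∃ s ∈ Set.Icc (0 : ℝ) t, ε < |Ahat n s ω - A s|})
      atTop (nhds 0) := by
  intro ε hε
  obtain ⟨F, hFD, hF⟩ := polya_net t (ε/2) ht (by linarith) A hAcont D hD hdense h0 hte
  have hincl : ∀ n, {ω | ∃ s ∈ Set.Icc (0 : ℝ) t, ε < |Ahat n s ω - A s|} ⊆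
      ⋃ r ∈ F, {ω | ε/2 < |Ahat n r ω - A r|} := by
    intro n ω hω
    obtain ⟨s, hs, hωs⟩ := hω
    obtain ⟨u, huF, v, hvF, hus, hsv, hAuv⟩ := hF s hs
    have huI : u ∈ Set.Icc (0:ℝ) t := hD (hFD huF)
    have hvI : v ∈ Set.Icc (0:ℝ) t := hD (hFD hvF)
    rcases lt_abs.mp hωs with hpos | hneg
    · -- Ahat n s ω - A s > ε : use v
      have h1 : Ahat n s ω ≤ Ahat n v ω := hmono n ω hs hvI hsv
      have h2 : A u ≤ A s := hAmono huI hs hus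
      have : ε/2 < Ahat n v ω - A v := by linarith
      refine Set.mem_biUnion hvF ?_
      exact lt_of_lt_of_le this (le_abs_self _)
    · -- A s - Ahat n s ω > ε : use u
      have h1 : Ahat n u ω ≤ Ahat n s ω := hmono n ω huI hs hus
      have h2 : A s ≤ A v := hAmono hs hvI hsv
      have : ε/2 < -(Ahat n u ω - A u) := by linarith
      refine Set.mem_biUnion huF ?_
      exact lt_of_lt_of_le this (neg_le_abs _)
  have hbound : ∀ n, P {ω | ∃ s ∈ Set.Icc (0 : ℝ) t, ε < |Ahat n s ω - A s|} ≤
      ∑ r ∈ F, P {ω | ε/2 < |Ahat n r ω - A r|} :=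
    fun n => (measure_mono (hincl n)).trans (measure_biUnion_finset_le F _)
  have hsum : Tendsto (fun n => ∑ r ∈ F, P {ω | ε/2 < |Ahat n r ω - A r|}) atTop (nhds 0) := by
    have := tendsto_finset_sum F (fun r hr => hpt r (hFD hr) (ε/2) (by linarith))
    simpa using this
  exact tendsto_of_tendsto_of_tendsto_of_le_of_le tendsto_const_nhds hsum
    (fun n => zero_le) hbound
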